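/- In LBIZ, the identity axiom generalizes from propositional variables to all formulas: for every BI formula F and every essence E(Γ̃; F) of a bunch of the form Γ̃; F, the sequent E(Γ̃; F) ⊢ F is derivable in LBIZ. -/
import Mathlib


/-- BI formulas: propositional variables, ⊤, ⊥, ⊤*, ∧, ∨, ⊃, *, −∗. -/
inductive BI : Type
  | var : Nat → BI
  | top : BI
  | bot : BI
  | mtop : BI
  | conj : BI → BI → BI
  | disj : BI → BI → BI
  | imp : BI → BI → BI
  | star : BI → BI → BI
  | wand : BI → BI → BI

/-- Bunches (BI structures): Γ := F | Γ; Γ | Γ, Γ. -/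
inductive Bunch : Type
  | fm : BI → Bunch
  | semi : Bunch → Bunch → Bunch   -- additive ';'
  | comma : Bunch → Bunch → Bunch  -- multiplicative ','

/-- Structural congruence: full associativity and commutativity of ';' and ','. -/
inductive BunchEq : Bunch → Bunch → Prop
  | refl (Γ : Bunch) : BunchEq Γ Γ
  | symm {a b} : BunchEq a b → BunchEq b a
  | trans {a b c} : BunchEq a b → BunchEq b c → BunchEq a c
  | semiComm (a b : Bunch) : BunchEq (.semi a b) (.semi b a)
  | semiAssoc (a b c : Bunch) : BunchEq (.semi (.semi a b) c) (.semi a (.semi b c))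
  | commaComm (a b : Bunch) : BunchEq (.comma a b) (.comma b a)
  | commaAssoc (a b c : Bunch) : BunchEq (.comma (.comma a b) c) (.comma a (.comma b c))
  | semiCongr {a a' b b'} : BunchEq a a' → BunchEq b b' → BunchEq (.semi a b) (.semi a' b')
  | commaCongr {a a' b b'} : BunchEq a a' → BunchEq b b' → BunchEq (.comma a b) (.comma a' b')

/-- Bunched contexts with a single hole. -/
inductive Ctx : Type
  | hole : Ctx
  | semiL : Ctx → Bunch → Ctx
  | semiR : Bunch → Ctx → Ctx
  | commaL : Ctx → Bunch → Ctx
  | commaR : Bunch → Ctx → Ctx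

/-- Filling the hole of a context with a bunch. -/
def Ctx.fill : Ctx → Bunch → Bunch
  | .hole, Δ => Δ
  | .semiL C Γ, Δ => .semi (C.fill Δ) Γ
  | .semiR Γ C, Δ => .semi Γ (C.fill Δ)
  | .commaL C Γ, Δ => .comma (C.fill Δ) Γ
  | .commaR Γ C, Δ => .comma Γ (C.fill Δ)

/-- `osemi Γ̃ Δ` is `Γ̃; Δ`, where `Γ̃` may be empty. -/
def osemi : Option Bunch → Bunch → Bunch
  | none, b => b
  | some a, b => .semi a b

/-- `ocomma Γ̃ Δ` is `Γ̃, Δ`, where `Γ̃` may be empty. -/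
def ocomma : Option Bunch → Bunch → Bunch
  | none, b => b
  | some a, b => .comma a b

/-- The weakening preorder ⪯ on bunches: smallest reflexive (up to structural
congruence) and transitive relation with Γ(Δ) ⪯ Γ(Δ; Γ'). -/
inductive Wle : Bunch → Bunch → Prop
  | ofEq {a b} : BunchEq a b → Wle a b
  | weak (C : Ctx) (Δ Γ' : Bunch) : Wle (C.fill Δ) (C.fill (.semi Δ Γ'))
  | trans {a b c} : Wle a b → Wle b c → Wle a c

/-- `(⊤*; Γ̃)` where `Γ̃` is possibly empty. -/
def mte : Option Bunch → Bunch
  | none => .fm .mtop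
  | some Δ => .semi (.fm .mtop) Δ

/-- `Essence Γ₁ Γ₂` : Γ₂ is an essence of Γ₁. -/
inductive Essence : Bunch → Bunch → Prop
  | ofEq {a b} : BunchEq a b → Essence a b
  | insert {a} (C : Ctx) (Γ' : Bunch) (Δ : Option Bunch) :
      Essence a (C.fill Γ') → Essence a (C.fill (.comma Γ' (mte Δ)))
  | insertSemi {a} (C : Ctx) (Γ' Γ'' : Bunch) (Δ : Option Bunch) :
      Essence a (C.fill (.semi Γ' Γ'')) →
      Essence a (C.fill (.semi (.comma Γ' (mte Δ)) Γ''))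
  | congr {a b c} : Essence a b → BunchEq b c → Essence a c

/-- `Candidate Γ R₁ R₂` : (R₁, R₂) is a candidate of Γ. -/
def Candidate (Γ R₁ R₂ : Bunch) : Prop :=
  (R₂ = .fm .mtop ∧ Wle R₁ Γ) ∨ Wle (.comma R₁ R₂) Γ

/-- The representing preorder ⪯̂. -/
inductive RWle : Bunch → Bunch → Prop
  | ofEq {a b} : BunchEq a b → RWle a b
  | weak (a b : Bunch) : RWle a (.semi a b)
  | weakComma (a b c : Bunch) : RWle (.comma a b) (.comma a (.semi b c))
  | trans {a b c} : RWle a b → RWle b c → RWle a c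

/-- `RepCandidate Γ R₁ R₂` : (R₁, R₂) is a representing candidate of Γ. -/
def RepCandidate (Γ R₁ R₂ : Bunch) : Prop :=
  (R₂ = .fm .mtop ∧ RWle R₁ Γ) ∨ RWle (.comma R₁ R₂) Γ

/-- The LBIZ sequent calculus (parametrised by the candidate relation used in
*R and −∗L, and by whether the Cut rule is available), with derivation depth.
There are no structural rules; bunches are identified up to
associativity/commutativity via the depth-neutral `equiv` rule. -/
inductive LBIZ (Cand : Bunch → Bunch → Bunch → Prop) (cut : Bool) :
    Bunch → BI → Nat → Prop
  | id (Γt : Option Bunch) (p : Nat) {Δ : Bunch} :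
      Essence (osemi Γt (.fm (.var p))) Δ → LBIZ Cand cut Δ (.var p) 1
  | botL (C : Ctx) (H : BI) : LBIZ Cand cut (C.fill (.fm .bot)) H 1
  | topR (Γ : Bunch) : LBIZ Cand cut Γ .top 1
  | mtopR (Γt : Option Bunch) {Δ : Bunch} :
      Essence (osemi Γt (.fm .mtop)) Δ → LBIZ Cand cut Δ .mtop 1
  | conjL {C : Ctx} {F G H n} :
      LBIZ Cand cut (C.fill (.semi (.fm F) (.fm G))) H n →
      LBIZ Cand cut (C.fill (.fm (.conj F G))) H (n + 1)
  | conjR {Γ F G n m} :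
      LBIZ Cand cut Γ F n → LBIZ Cand cut Γ G m →
      LBIZ Cand cut Γ (.conj F G) (max n m + 1)
  | disjL {C : Ctx} {F G H n m} :
      LBIZ Cand cut (C.fill (.fm F)) H n → LBIZ Cand cut (C.fill (.fm G)) H m →
      LBIZ Cand cut (C.fill (.fm (.disj F G))) H (max n m + 1)
  | disjR₁ {Γ F G n} : LBIZ Cand cut Γ F n → LBIZ Cand cut Γ (.disj F G) (n + 1)
  | disjR₂ {Γ F G n} : LBIZ Cand cut Γ G n → LBIZ Cand cut Γ (.disj F G) (n + 1)
  | impL (Γt : Option Bunch) {F G : BI} {Δ : Bunch} {C : Ctx} {H n m} :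
      Essence (osemi Γt (.fm (.imp F G))) Δ →
      LBIZ Cand cut Δ F n →
      LBIZ Cand cut (C.fill (.semi (.fm G) Δ)) H m →
      LBIZ Cand cut (C.fill Δ) H (max n m + 1)
  | impR {Γ F G n} :
      LBIZ Cand cut (.semi Γ (.fm F)) G n → LBIZ Cand cut Γ (.imp F G) (n + 1)
  | starL {C : Ctx} {F G H n} :
      LBIZ Cand cut (C.fill (.comma (.fm F) (.fm G))) H n →
      LBIZ Cand cut (C.fill (.fm (.star F G))) H (n + 1)
  | starR {Γ' R₁ R₂ : Bunch} {F G n m} :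
      (Cand Γ' R₁ R₂ ∨ Cand Γ' R₂ R₁) →
      LBIZ Cand cut R₁ F n → LBIZ Cand cut R₂ G m →
      LBIZ Cand cut Γ' (.star F G) (max n m + 1)
  | wandL (Γ'o Rej : Option Bunch) (Rei : Bunch) (Γt : Option Bunch)
      {F G : BI} {Δ : Bunch} {C : Ctx} {H n m} :
      Essence (osemi Γt (.fm (.wand F G))) Δ →
      ((Γ'o = none ∧ Rei = .fm .mtop ∧ Rej = none) ∨
        (∃ Γ' Rj, Γ'o = some Γ' ∧ Rej = some Rj ∧
          (Cand Γ' Rei Rj ∨ Cand Γ' Rj Rei))) →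
      LBIZ Cand cut Rei F n →
      LBIZ Cand cut (C.fill (.semi (ocomma Rej (.fm G)) (ocomma Γ'o Δ))) H m →
      LBIZ Cand cut (C.fill (ocomma Γ'o Δ)) H (max n m + 1)
  | wandR {Γ F G n} :
      LBIZ Cand cut (.comma Γ (.fm F)) G n → LBIZ Cand cut Γ (.wand F G) (n + 1)
  | equiv {Γ Γ' H n} : BunchEq Γ Γ' → LBIZ Cand cut Γ H n → LBIZ Cand cut Γ' H n
  | cutRule {Γ₁ : Bunch} {F : BI} {C : Ctx} {G n m} :
      cut = true →
      LBIZ Cand cut Γ₁ F n → LBIZ Cand cut (C.fill (.fm F)) G m →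
      LBIZ Cand cut (C.fill Γ₁) G (max n m + 1)

/-- LBIZ proper: candidate relation `Candidate`, no Cut. -/
abbrev LBIZc : Bunch → BI → Nat → Prop := LBIZ Candidate false

/-- The LBI sequent calculus (without Cut), parametrised by whether contraction
is available for arbitrary bunches (`full = true`) or only for single formulas. -/
inductive LBIg (full : Bool) : Bunch → BI → Prop
  | id (F : BI) : LBIg full (.fm F) F
  | botL (C : Ctx) (H : BI) : LBIg full (C.fill (.fm .bot)) H
  | topR (Γ : Bunch) : LBIg full Γ .top
  | mtopR : LBIg full (.fm .mtop) .mtop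
  | conjL {C : Ctx} {F G H} :
      LBIg full (C.fill (.semi (.fm F) (.fm G))) H →
      LBIg full (C.fill (.fm (.conj F G))) H
  | conjR {Γ F G} : LBIg full Γ F → LBIg full Γ G → LBIg full Γ (.conj F G)
  | disjL {C : Ctx} {F G H} :
      LBIg full (C.fill (.fm F)) H → LBIg full (C.fill (.fm G)) H →
      LBIg full (C.fill (.fm (.disj F G))) H
  | disjR₁ {Γ F G} : LBIg full Γ F → LBIg full Γ (.disj F G)
  | disjR₂ {Γ F G} : LBIg full Γ G → LBIg full Γ (.disj F G)
  | impL {Γ₁ : Bunch} {C : Ctx} {F G H} :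
      LBIg full Γ₁ F → LBIg full (C.fill (.semi Γ₁ (.fm G))) H →
      LBIg full (C.fill (.semi Γ₁ (.fm (.imp F G)))) H
  | impR {Γ F G} : LBIg full (.semi Γ (.fm F)) G → LBIg full Γ (.imp F G)
  | starL {C : Ctx} {F G H} :
      LBIg full (C.fill (.comma (.fm F) (.fm G))) H →
      LBIg full (C.fill (.fm (.star F G))) H
  | starR {Γ₁ Γ₂ F G} :
      LBIg full Γ₁ F → LBIg full Γ₂ G → LBIg full (.comma Γ₁ Γ₂) (.star F G)
  | wandL {Γ₁ : Bunch} {C : Ctx} {F G H} :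
      LBIg full Γ₁ F → LBIg full (C.fill (.fm G)) H →
      LBIg full (C.fill (.comma Γ₁ (.fm (.wand F G)))) H
  | wandR {Γ F G} : LBIg full (.comma Γ (.fm F)) G → LBIg full Γ (.wand F G)
  | wk {C : Ctx} {Γ₁ Γ₂ H} :
      LBIg full (C.fill Γ₁) H → LBIg full (C.fill (.semi Γ₁ Γ₂)) H
  | ctr {C : Ctx} {Γ₁ H} :
      (full = true ∨ ∃ A, Γ₁ = .fm A) →
      LBIg full (C.fill (.semi Γ₁ Γ₁)) H → LBIg full (C.fill Γ₁) H
  | eqAnt1a {C : Ctx} {Γ₁ H} :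
      LBIg full (C.fill (.semi Γ₁ (.fm .top))) H → LBIg full (C.fill Γ₁) H
  | eqAnt1b {C : Ctx} {Γ₁ H} :
      LBIg full (C.fill Γ₁) H → LBIg full (C.fill (.semi Γ₁ (.fm .top))) H
  | eqAnt2a {C : Ctx} {Γ₁ H} :
      LBIg full (C.fill (.comma Γ₁ (.fm .mtop))) H → LBIg full (C.fill Γ₁) H
  | eqAnt2b {C : Ctx} {Γ₁ H} :
      LBIg full (C.fill Γ₁) H → LBIg full (C.fill (.comma Γ₁ (.fm .mtop))) H
  | equiv {Γ Γ' H} : BunchEq Γ Γ' → LBIg full Γ H → LBIg full Γ' H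

/-- LBI with unrestricted (structural) contraction. -/
abbrev LBI : Bunch → BI → Prop := LBIg true

/-- One application of the LBI weakening rule Wk L on a sequent
(also allowing structural-congruence adjustments). -/
inductive WkStep : Bunch × BI → Bunch × BI → Prop
  | step (C : Ctx) (Δ Γ' : Bunch) (H : BI) :
      WkStep (C.fill Δ, H) (C.fill (.semi Δ Γ'), H)
  | equiv {Γ₁ Γ₂ : Bunch} (H : BI) : BunchEq Γ₁ Γ₂ → WkStep (Γ₁, H) (Γ₂, H)

/-- One application of Wk L or of either direction of EqAnt₂ on a sequent. -/
inductive WkEq2Step : Bunch × BI → Bunch × BI → Prop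
  | wk (C : Ctx) (Δ Γ' : Bunch) (H : BI) :
      WkEq2Step (C.fill Δ, H) (C.fill (.semi Δ Γ'), H)
  | eq2a (C : Ctx) (Γ₁ : Bunch) (H : BI) :
      WkEq2Step (C.fill (.comma Γ₁ (.fm .mtop)), H) (C.fill Γ₁, H)
  | eq2b (C : Ctx) (Γ₁ : Bunch) (H : BI) :
      WkEq2Step (C.fill Γ₁, H) (C.fill (.comma Γ₁ (.fm .mtop)), H)
  | equiv {Γ₁ Γ₂ : Bunch} (H : BI) : BunchEq Γ₁ Γ₂ → WkEq2Step (Γ₁, H) (Γ₂, H)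

/-- The preorder generated by weakening together with insertion of
multiplicative-unit components. -/
inductive WleM : Bunch → Bunch → Prop
  | ofEq {a b} : BunchEq a b → WleM a b
  | weak (C : Ctx) (Δ Γ' : Bunch) : WleM (C.fill Δ) (C.fill (.semi Δ Γ'))
  | munit (C : Ctx) (Δ : Bunch) : WleM (C.fill Δ) (C.fill (.comma Δ (.fm .mtop)))
  | trans {a b c} : WleM a b → WleM b c → WleM a c


namespace LBIZAux

open Bunch Ctx

/-- Composition of contexts. -/
def Ctx.comp : Ctx → Ctx → Ctx
  | .hole, D => D
  | .semiL C b, D => .semiL (Ctx.comp C D) b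
  | .semiR b C, D => .semiR b (Ctx.comp C D)
  | .commaL C b, D => .commaL (Ctx.comp C D) b
  | .commaR b C, D => .commaR b (Ctx.comp C D)

lemma fill_comp (C D : Ctx) (X : Bunch) :
    (Ctx.comp C D).fill X = C.fill (D.fill X) := by
  induction C <;> simp [Ctx.comp, Ctx.fill, *]

/-- Keep only comma nodes on the path to the hole. -/
def pc : Ctx → Ctx
  | .hole => .hole
  | .semiL C _ => pc C
  | .semiR _ C => pc C
  | .commaL C b => .commaL (pc C) b
  | .commaR b C => .commaR b (pc C)

lemma pc_comp (C D : Ctx) : pc (Ctx.comp C D) = Ctx.comp (pc C) (pc D) := by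
  induction C <;> simp [Ctx.comp, pc, *]

lemma beqCtx {a b : Bunch} (C : Ctx) (h : BunchEq a b) :
    BunchEq (C.fill a) (C.fill b) := by
  induction C with
  | hole => exact h
  | semiL C c ih => exact BunchEq.semiCongr ih (BunchEq.refl _)
  | semiR c C ih => exact BunchEq.semiCongr (BunchEq.refl _) ih
  | commaL C c ih => exact BunchEq.commaCongr ih (BunchEq.refl _)
  | commaR c C ih => exact BunchEq.commaCongr (BunchEq.refl _) ih

lemma wleCtx {a b : Bunch} (C : Ctx) (h : Wle a b) : Wle (C.fill a) (C.fill b) := by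
  induction h with
  | ofEq e => exact Wle.ofEq (beqCtx C e)
  | weak C0 Δ Γ' =>
      have := Wle.weak (Ctx.comp C C0) Δ Γ'
      rwa [fill_comp, fill_comp] at this
  | trans h1 h2 ih1 ih2 => exact Wle.trans ih1 ih2

lemma pcWle (C : Ctx) (Y : Bunch) : Wle ((pc C).fill Y) (C.fill Y) := by
  induction C with
  | hole => exact Wle.ofEq (BunchEq.refl _)
  | semiL C c ih =>
      exact Wle.trans ih (Wle.weak Ctx.hole (C.fill Y) c)
  | semiR c C ih =>
      refine Wle.trans ih (Wle.trans (Wle.weak Ctx.hole (C.fill Y) c) ?_)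
      exact Wle.ofEq (BunchEq.semiComm _ _)
  | commaL C c ih => exact wleCtx (Ctx.commaL Ctx.hole c) ih
  | commaR c C ih => exact wleCtx (Ctx.commaR c Ctx.hole) ih

lemma pull (C : Ctx) (X Y : Bunch) :
    BunchEq ((pc C).fill (.comma X Y)) (.comma X ((pc C).fill Y)) := by
  induction C with
  | hole => exact BunchEq.refl _
  | semiL C c ih => exact ih
  | semiR c C ih => exact ih
  | commaL C c ih =>
      refine BunchEq.trans (BunchEq.commaCongr ih (BunchEq.refl c)) ?_
      exact BunchEq.commaAssoc _ _ _
  | commaR c C ih =>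
      refine BunchEq.trans (BunchEq.commaCongr (BunchEq.refl c) ih) ?_
      refine BunchEq.trans (BunchEq.symm (BunchEq.commaAssoc _ _ _)) ?_
      refine BunchEq.trans (BunchEq.commaCongr (BunchEq.commaComm _ _) (BunchEq.refl _)) ?_
      exact BunchEq.commaAssoc _ _ _

lemma essEqLeft {a a' b : Bunch} (e : BunchEq a a') (h : Essence a' b) : Essence a b := by
  induction h with
  | ofEq e' => exact Essence.ofEq (BunchEq.trans e e')
  | insert C Γ' Δ h ih => exact Essence.insert C Γ' Δ ih
  | insertSemi C Γ' Γ'' Δ h ih => exact Essence.insertSemi C Γ' Γ'' Δ ih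
  | congr h e' ih => exact Essence.congr ih e'

lemma essSemi {a b : Bunch} (c : Bunch) (h : Essence a b) :
    Essence (.semi a c) (.semi b c) := by
  induction h with
  | ofEq e => exact Essence.ofEq (BunchEq.semiCongr e (BunchEq.refl c))
  | insert C Γ' Δ h ih => exact Essence.insert (Ctx.semiL C c) Γ' Δ ih
  | insertSemi C Γ' Γ'' Δ h ih => exact Essence.insertSemi (Ctx.semiL C c) Γ' Γ'' Δ ih
  | congr h e ih => exact Essence.congr ih (BunchEq.semiCongr e (BunchEq.refl c))


/-- Substitution property: an occurrence of a formula can be tracked through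
structural congruence, substitutively, also tracking the comma-path context. -/
def Sub (H : BI) (a b : Bunch) : Prop :=
  ∀ C₀ : Ctx, a = C₀.fill (.fm H) →
    ∃ C : Ctx, b = C.fill (.fm H) ∧ (∀ Y, BunchEq (C₀.fill Y) (C.fill Y)) ∧
      (∀ Y, BunchEq ((pc C₀).fill Y) ((pc C).fill Y))

lemma sub_refl {H a} : Sub H a a :=
  fun C₀ h => ⟨C₀, h, fun _ => BunchEq.refl _, fun _ => BunchEq.refl _⟩

lemma sub_trans {H a b c} (s1 : Sub H a b) (s2 : Sub H b c) : Sub H a c := by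
  intro C₀ h
  obtain ⟨C1, hb, e1, p1⟩ := s1 C₀ h
  obtain ⟨C2, hc, e2, p2⟩ := s2 C1 hb
  exact ⟨C2, hc, fun Y => BunchEq.trans (e1 Y) (e2 Y),
    fun Y => BunchEq.trans (p1 Y) (p2 Y)⟩

lemma sub_semiComm {H a b} : Sub H (.semi a b) (.semi b a) := by
  intro C₀ h
  cases C₀ with
  | hole => simp [Ctx.fill] at h
  | semiL D c =>
      simp only [Ctx.fill] at h
      injection h with h1 h2; subst h2; subst h1
      exact ⟨.semiR b D, rfl, fun Y => BunchEq.semiComm _ _, fun Y => BunchEq.refl _⟩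
  | semiR c D =>
      simp only [Ctx.fill] at h
      injection h with h1 h2; subst h2; subst h1
      exact ⟨.semiL D a, rfl, fun Y => BunchEq.semiComm _ _, fun Y => BunchEq.refl _⟩
  | commaL D c => simp [Ctx.fill] at h
  | commaR c D => simp [Ctx.fill] at h

lemma sub_commaComm {H a b} : Sub H (.comma a b) (.comma b a) := by
  intro C₀ h
  cases C₀ with
  | hole => simp [Ctx.fill] at h
  | commaL D c =>
      simp only [Ctx.fill] at h
      injection h with h1 h2; subst h2; subst h1
      exact ⟨.commaR b D, rfl, fun Y => BunchEq.commaComm _ _,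
        fun Y => BunchEq.commaComm _ _⟩
  | commaR c D =>
      simp only [Ctx.fill] at h
      injection h with h1 h2; subst h2; subst h1
      exact ⟨.commaL D a, rfl, fun Y => BunchEq.commaComm _ _,
        fun Y => BunchEq.commaComm _ _⟩
  | semiL D c => simp [Ctx.fill] at h
  | semiR c D => simp [Ctx.fill] at h

lemma sub_semiAssoc1 {H a b c} : Sub H (.semi (.semi a b) c) (.semi a (.semi b c)) := by
  intro C₀ h
  cases C₀ with
  | hole => simp [Ctx.fill] at h
  | semiL D c' =>
      simp only [Ctx.fill] at h
      injection h with h1 h2; subst h2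
      cases D with
      | hole => simp [Ctx.fill] at h1
      | semiL E d =>
          simp only [Ctx.fill] at h1
          injection h1 with g1 g2; subst g2; subst g1
          exact ⟨.semiL E (.semi b c), rfl, fun Y => BunchEq.semiAssoc _ _ _,
            fun Y => BunchEq.refl _⟩
      | semiR d E =>
          simp only [Ctx.fill] at h1
          injection h1 with g1 g2; subst g2; subst g1
          exact ⟨.semiR a (.semiL E c), rfl, fun Y => BunchEq.semiAssoc _ _ _,
            fun Y => BunchEq.refl _⟩
      | commaL E d => simp [Ctx.fill] at h1
      | commaR d E => simp [Ctx.fill] at h1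
  | semiR c' D =>
      simp only [Ctx.fill] at h
      injection h with h1 h2; subst h2; subst h1
      exact ⟨.semiR a (.semiR b D), rfl, fun Y => BunchEq.semiAssoc _ _ _,
        fun Y => BunchEq.refl _⟩
  | commaL D c' => simp [Ctx.fill] at h
  | commaR c' D => simp [Ctx.fill] at h

lemma sub_semiAssoc2 {H a b c} : Sub H (.semi a (.semi b c)) (.semi (.semi a b) c) := by
  intro C₀ h
  cases C₀ with
  | hole => simp [Ctx.fill] at h
  | semiL D c' =>
      simp only [Ctx.fill] at h
      injection h with h1 h2; subst h2; subst h1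
      exact ⟨.semiL (.semiL D b) c, rfl,
        fun Y => BunchEq.symm (BunchEq.semiAssoc _ _ _), fun Y => BunchEq.refl _⟩
  | semiR c' D =>
      simp only [Ctx.fill] at h
      injection h with h1 h2; subst h1
      cases D with
      | hole => simp [Ctx.fill] at h2
      | semiL E d =>
          simp only [Ctx.fill] at h2
          injection h2 with g1 g2; subst g2; subst g1
          exact ⟨.semiL (.semiR a E) c, rfl,
            fun Y => BunchEq.symm (BunchEq.semiAssoc _ _ _), fun Y => BunchEq.refl _⟩
      | semiR d E =>
          simp only [Ctx.fill] at h2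
          injection h2 with g1 g2; subst g2; subst g1
          exact ⟨.semiR (.semi a b) E, rfl,
            fun Y => BunchEq.symm (BunchEq.semiAssoc _ _ _), fun Y => BunchEq.refl _⟩
      | commaL E d => simp [Ctx.fill] at h2
      | commaR d E => simp [Ctx.fill] at h2
  | commaL D c' => simp [Ctx.fill] at h
  | commaR c' D => simp [Ctx.fill] at h

lemma sub_commaAssoc1 {H a b c} :
    Sub H (.comma (.comma a b) c) (.comma a (.comma b c)) := by
  intro C₀ h
  cases C₀ with
  | hole => simp [Ctx.fill] at h
  | commaL D c' =>
      simp only [Ctx.fill] at h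
      injection h with h1 h2; subst h2
      cases D with
      | hole => simp [Ctx.fill] at h1
      | commaL E d =>
          simp only [Ctx.fill] at h1
          injection h1 with g1 g2; subst g2; subst g1
          exact ⟨.commaL E (.comma b c), rfl, fun Y => BunchEq.commaAssoc _ _ _,
            fun Y => BunchEq.commaAssoc _ _ _⟩
      | commaR d E =>
          simp only [Ctx.fill] at h1
          injection h1 with g1 g2; subst g2; subst g1
          exact ⟨.commaR a (.commaL E c), rfl, fun Y => BunchEq.commaAssoc _ _ _,
            fun Y => BunchEq.commaAssoc _ _ _⟩
      | semiL E d => simp [Ctx.fill] at h1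
      | semiR d E => simp [Ctx.fill] at h1
  | commaR c' D =>
      simp only [Ctx.fill] at h
      injection h with h1 h2; subst h2; subst h1
      exact ⟨.commaR a (.commaR b D), rfl, fun Y => BunchEq.commaAssoc _ _ _,
        fun Y => BunchEq.commaAssoc _ _ _⟩
  | semiL D c' => simp [Ctx.fill] at h
  | semiR c' D => simp [Ctx.fill] at h

lemma sub_commaAssoc2 {H a b c} :
    Sub H (.comma a (.comma b c)) (.comma (.comma a b) c) := by
  intro C₀ h
  cases C₀ with
  | hole => simp [Ctx.fill] at h
  | commaL D c' =>
      simp only [Ctx.fill] at h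
      injection h with h1 h2; subst h2; subst h1
      exact ⟨.commaL (.commaL D b) c, rfl,
        fun Y => BunchEq.symm (BunchEq.commaAssoc _ _ _),
        fun Y => BunchEq.symm (BunchEq.commaAssoc _ _ _)⟩
  | commaR c' D =>
      simp only [Ctx.fill] at h
      injection h with h1 h2; subst h1
      cases D with
      | hole => simp [Ctx.fill] at h2
      | commaL E d =>
          simp only [Ctx.fill] at h2
          injection h2 with g1 g2; subst g2; subst g1
          exact ⟨.commaL (.commaR a E) c, rfl,
            fun Y => BunchEq.symm (BunchEq.commaAssoc _ _ _),
            fun Y => BunchEq.symm (BunchEq.commaAssoc _ _ _)⟩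
      | commaR d E =>
          simp only [Ctx.fill] at h2
          injection h2 with g1 g2; subst g2; subst g1
          exact ⟨.commaR (.comma a b) E, rfl,
            fun Y => BunchEq.symm (BunchEq.commaAssoc _ _ _),
            fun Y => BunchEq.symm (BunchEq.commaAssoc _ _ _)⟩
      | semiL E d => simp [Ctx.fill] at h2
      | semiR d E => simp [Ctx.fill] at h2
  | semiL D c' => simp [Ctx.fill] at h
  | semiR c' D => simp [Ctx.fill] at h

lemma sub_semiCongr {H a a' b b'} (ea : BunchEq a a') (eb : BunchEq b b')
    (sa : Sub H a a') (sb : Sub H b b') : Sub H (.semi a b) (.semi a' b') := by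
  intro C₀ h
  cases C₀ with
  | hole => simp [Ctx.fill] at h
  | semiL D c =>
      simp only [Ctx.fill] at h
      injection h with h1 h2; subst h2
      obtain ⟨C1, ha', e1, p1⟩ := sa D h1
      exact ⟨.semiL C1 b', by simp [Ctx.fill, ha'],
        fun Y => BunchEq.semiCongr (e1 Y) eb, fun Y => p1 Y⟩
  | semiR c D =>
      simp only [Ctx.fill] at h
      injection h with h1 h2; subst h1
      obtain ⟨C1, hb', e1, p1⟩ := sb D h2
      exact ⟨.semiR a' C1, by simp [Ctx.fill, hb'],
        fun Y => BunchEq.semiCongr ea (e1 Y), fun Y => p1 Y⟩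
  | commaL D c => simp [Ctx.fill] at h
  | commaR c D => simp [Ctx.fill] at h

lemma sub_commaCongr {H a a' b b'} (ea : BunchEq a a') (eb : BunchEq b b')
    (sa : Sub H a a') (sb : Sub H b b') : Sub H (.comma a b) (.comma a' b') := by
  intro C₀ h
  cases C₀ with
  | hole => simp [Ctx.fill] at h
  | commaL D c =>
      simp only [Ctx.fill] at h
      injection h with h1 h2; subst h2
      obtain ⟨C1, ha', e1, p1⟩ := sa D h1
      exact ⟨.commaL C1 b', by simp [Ctx.fill, ha'],
        fun Y => BunchEq.commaCongr (e1 Y) eb,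
        fun Y => BunchEq.commaCongr (p1 Y) eb⟩
  | commaR c D =>
      simp only [Ctx.fill] at h
      injection h with h1 h2; subst h1
      obtain ⟨C1, hb', e1, p1⟩ := sb D h2
      exact ⟨.commaR a' C1, by simp [Ctx.fill, hb'],
        fun Y => BunchEq.commaCongr ea (e1 Y),
        fun Y => BunchEq.commaCongr ea (p1 Y)⟩
  | semiL D c => simp [Ctx.fill] at h
  | semiR c D => simp [Ctx.fill] at h

lemma besub {a b : Bunch} (h : BunchEq a b) (H : BI) : Sub H a b ∧ Sub H b a := by
  induction h with
  | refl => exact ⟨sub_refl, sub_refl⟩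
  | symm h ih => exact ⟨ih.2, ih.1⟩
  | trans h1 h2 ih1 ih2 => exact ⟨sub_trans ih1.1 ih2.1, sub_trans ih2.2 ih1.2⟩
  | semiComm a b => exact ⟨sub_semiComm, sub_semiComm⟩
  | semiAssoc a b c => exact ⟨sub_semiAssoc1, sub_semiAssoc2⟩
  | commaComm a b => exact ⟨sub_commaComm, sub_commaComm⟩
  | commaAssoc a b c => exact ⟨sub_commaAssoc1, sub_commaAssoc2⟩
  | semiCongr ha hb iha ihb =>
      exact ⟨sub_semiCongr ha hb iha.1 ihb.1,
        sub_semiCongr (BunchEq.symm ha) (BunchEq.symm hb) iha.2 ihb.2⟩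
  | commaCongr ha hb iha ihb =>
      exact ⟨sub_commaCongr ha hb iha.1 ihb.1,
        sub_commaCongr (BunchEq.symm ha) (BunchEq.symm hb) iha.2 ihb.2⟩


/-- Splitting an occurrence of a formula against a context decomposition. -/
lemma split (H : BI) : ∀ (C' C : Ctx) (Γ' : Bunch), C.fill (.fm H) = C'.fill Γ' →
    (∃ D, C = Ctx.comp C' D ∧ Γ' = D.fill (.fm H)) ∨
    (∃ K : Bunch → Ctx, C = K Γ' ∧ (∀ Z, (K Z).fill (.fm H) = C'.fill Z) ∧
      (∀ Y, ∃ Cs : Ctx, ∀ Z, (K Z).fill Y = Cs.fill Z) ∧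
      (∀ Y, (∃ Cs : Ctx, ∀ Z, (pc (K Z)).fill Y = Cs.fill Z) ∨
        (∀ Z Z', pc (K Z) = pc (K Z')))) := by
  intro C'
  induction C' with
  | hole =>
      intro C Γ' h
      exact Or.inl ⟨C, rfl, h.symm⟩
  | semiL C₁ b ih =>
      intro C Γ' h
      cases C with
      | hole => simp [Ctx.fill] at h
      | semiL C₂ b₂ =>
          simp only [Ctx.fill] at h
          injection h with h1 h2; subst h2
          rcases ih C₂ Γ' h1 with ⟨D, hD, hG⟩ | ⟨K, k2, k0, k1, k3⟩
          · exact Or.inl ⟨D, by simp [Ctx.comp, hD], hG⟩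
          · refine Or.inr ⟨fun Z => .semiL (K Z) b₂, by simp [k2], ?_, ?_, ?_⟩
            · intro Z; simp [Ctx.fill, k0]
            · intro Y; obtain ⟨Cs, hCs⟩ := k1 Y
              exact ⟨.semiL Cs b₂, fun Z => by simp [Ctx.fill, hCs]⟩
            · intro Y
              rcases k3 Y with ⟨Cs, hCs⟩ | hc
              · exact Or.inl ⟨Cs, fun Z => by simp [pc, hCs]⟩
              · exact Or.inr fun Z Z' => by simp [pc, hc Z Z']
      | semiR b₂ C₂ =>
          simp only [Ctx.fill] at h
          injection h with h1 h2; subst h1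
          refine Or.inr ⟨fun Z => .semiR (C₁.fill Z) C₂, rfl, ?_, ?_, ?_⟩
          · intro Z; simp [Ctx.fill, h2]
          · intro Y; exact ⟨.semiL C₁ (C₂.fill Y), fun Z => rfl⟩
          · exact fun Y => Or.inr fun Z Z' => rfl
      | commaL C₂ b₂ => simp [Ctx.fill] at h
      | commaR b₂ C₂ => simp [Ctx.fill] at h
  | semiR b C₁ ih =>
      intro C Γ' h
      cases C with
      | hole => simp [Ctx.fill] at h
      | semiR b₂ C₂ =>
          simp only [Ctx.fill] at h
          injection h with h1 h2; subst h1
          rcases ih C₂ Γ' h2 with ⟨D, hD, hG⟩ | ⟨K, k2, k0, k1, k3⟩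
          · exact Or.inl ⟨D, by simp [Ctx.comp, hD], hG⟩
          · refine Or.inr ⟨fun Z => .semiR b₂ (K Z), by simp [k2], ?_, ?_, ?_⟩
            · intro Z; simp [Ctx.fill, k0]
            · intro Y; obtain ⟨Cs, hCs⟩ := k1 Y
              exact ⟨.semiR b₂ Cs, fun Z => by simp [Ctx.fill, hCs]⟩
            · intro Y
              rcases k3 Y with ⟨Cs, hCs⟩ | hc
              · exact Or.inl ⟨Cs, fun Z => by simp [pc, hCs]⟩
              · exact Or.inr fun Z Z' => by simp [pc, hc Z Z']
      | semiL C₂ b₂ =>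
          simp only [Ctx.fill] at h
          injection h with h1 h2; subst h2
          refine Or.inr ⟨fun Z => .semiL C₂ (C₁.fill Z), rfl, ?_, ?_, ?_⟩
          · intro Z; simp [Ctx.fill, h1]
          · intro Y; exact ⟨.semiR (C₂.fill Y) C₁, fun Z => rfl⟩
          · exact fun Y => Or.inr fun Z Z' => rfl
      | commaL C₂ b₂ => simp [Ctx.fill] at h
      | commaR b₂ C₂ => simp [Ctx.fill] at h
  | commaL C₁ b ih =>
      intro C Γ' h
      cases C with
      | hole => simp [Ctx.fill] at h
      | commaL C₂ b₂ =>
          simp only [Ctx.fill] at h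
          injection h with h1 h2; subst h2
          rcases ih C₂ Γ' h1 with ⟨D, hD, hG⟩ | ⟨K, k2, k0, k1, k3⟩
          · exact Or.inl ⟨D, by simp [Ctx.comp, hD], hG⟩
          · refine Or.inr ⟨fun Z => .commaL (K Z) b₂, by simp [k2], ?_, ?_, ?_⟩
            · intro Z; simp [Ctx.fill, k0]
            · intro Y; obtain ⟨Cs, hCs⟩ := k1 Y
              exact ⟨.commaL Cs b₂, fun Z => by simp [Ctx.fill, hCs]⟩
            · intro Y
              rcases k3 Y with ⟨Cs, hCs⟩ | hc
              · exact Or.inl ⟨.commaL Cs b₂, fun Z => by simp [pc, Ctx.fill, hCs]⟩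
              · exact Or.inr fun Z Z' => by simp [pc, hc Z Z']
      | commaR b₂ C₂ =>
          simp only [Ctx.fill] at h
          injection h with h1 h2; subst h1
          refine Or.inr ⟨fun Z => .commaR (C₁.fill Z) C₂, rfl, ?_, ?_, ?_⟩
          · intro Z; simp [Ctx.fill, h2]
          · intro Y; exact ⟨.commaL C₁ (C₂.fill Y), fun Z => rfl⟩
          · intro Y
            exact Or.inl ⟨.commaL C₁ ((pc C₂).fill Y), fun Z => rfl⟩
      | semiL C₂ b₂ => simp [Ctx.fill] at h
      | semiR b₂ C₂ => simp [Ctx.fill] at h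
  | commaR b C₁ ih =>
      intro C Γ' h
      cases C with
      | hole => simp [Ctx.fill] at h
      | commaR b₂ C₂ =>
          simp only [Ctx.fill] at h
          injection h with h1 h2; subst h1
          rcases ih C₂ Γ' h2 with ⟨D, hD, hG⟩ | ⟨K, k2, k0, k1, k3⟩
          · exact Or.inl ⟨D, by simp [Ctx.comp, hD], hG⟩
          · refine Or.inr ⟨fun Z => .commaR b₂ (K Z), by simp [k2], ?_, ?_, ?_⟩
            · intro Z; simp [Ctx.fill, k0]
            · intro Y; obtain ⟨Cs, hCs⟩ := k1 Y
              exact ⟨.commaR b₂ Cs, fun Z => by simp [Ctx.fill, hCs]⟩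
            · intro Y
              rcases k3 Y with ⟨Cs, hCs⟩ | hc
              · exact Or.inl ⟨.commaR b₂ Cs, fun Z => by simp [pc, Ctx.fill, hCs]⟩
              · exact Or.inr fun Z Z' => by simp [pc, hc Z Z']
      | commaL C₂ b₂ =>
          simp only [Ctx.fill] at h
          injection h with h1 h2; subst h2
          refine Or.inr ⟨fun Z => .commaL C₂ (C₁.fill Z), rfl, ?_, ?_, ?_⟩
          · intro Z; simp [Ctx.fill, h1]
          · intro Y; exact ⟨.commaR (C₂.fill Y) C₁, fun Z => rfl⟩
          · intro Y
            exact Or.inl ⟨.commaR ((pc C₂).fill Y) C₁, fun Z => rfl⟩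
      | semiL C₂ b₂ => simp [Ctx.fill] at h
      | semiR b₂ C₂ => simp [Ctx.fill] at h


/-- One insertion step preserves the occurrence decomposition invariant. -/
lemma step (Γt : Option Bunch) (H : BI) (C' : Ctx) (Γ' : Bunch) (m : Option Bunch)
    (C : Ctx) (h1 : C'.fill Γ' = C.fill (.fm H))
    (h2 : ∀ Y, Essence (osemi Γt Y) (C.fill Y))
    (h3 : ∀ Y, Essence Y ((pc C).fill Y)) :
    ∃ Cn : Ctx, C'.fill (.comma Γ' (mte m)) = Cn.fill (.fm H) ∧
      (∀ Y, Essence (osemi Γt Y) (Cn.fill Y)) ∧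
      (∀ Y, Essence Y ((pc Cn).fill Y)) := by
  rcases split H C' C Γ' h1.symm with ⟨D, hD, hG⟩ | ⟨K, k2, k0, k1, k3⟩
  · subst hD; subst hG
    refine ⟨Ctx.comp C' (.commaL D (mte m)), by rw [fill_comp]; rfl, ?_, ?_⟩
    · intro Y
      have h := h2 Y
      rw [fill_comp] at h
      have h' := Essence.insert C' (D.fill Y) m h
      rw [fill_comp]
      exact h'
    · intro Y
      have h := h3 Y
      rw [pc_comp, fill_comp] at h
      have h' := Essence.insert (pc C') ((pc D).fill Y) m h
      rw [pc_comp, fill_comp]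
      exact h'
  · refine ⟨K (.comma Γ' (mte m)), (k0 _).symm, ?_, ?_⟩
    · intro Y
      obtain ⟨Cs, hCs⟩ := k1 Y
      have h := h2 Y
      rw [k2, hCs] at h
      rw [hCs]
      exact Essence.insert Cs Γ' m h
    · intro Y
      rcases k3 Y with ⟨Cs, hCs⟩ | hc
      · have h := h3 Y
        rw [k2, hCs] at h
        rw [hCs]
        exact Essence.insert Cs Γ' m h
      · have h := h3 Y
        rw [k2] at h
        rw [hc (.comma Γ' (mte m)) Γ']
        exact h

/-- Essence decomposition: an essence of Γ̃; H carries a substitutive occurrence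
of H together with an insertable comma-path context. -/
lemma key {a Δ : Bunch} (h : Essence a Δ) :
    ∀ (Γt : Option Bunch) (H : BI), a = osemi Γt (.fm H) →
    ∃ C : Ctx, Δ = C.fill (.fm H) ∧ (∀ Y, Essence (osemi Γt Y) (C.fill Y)) ∧
      (∀ Y, Essence Y ((pc C).fill Y)) := by
  induction h with
  | ofEq e =>
      intro Γt H ha
      subst ha
      set C₀ : Ctx := (match Γt with | none => .hole | some Γ => .semiR Γ .hole) with hC₀
      have hfill : ∀ Y, C₀.fill Y = osemi Γt Y := by
        intro Y; cases Γt <;> rfl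
      have hpc : pc C₀ = .hole := by cases Γt <;> rfl
      obtain ⟨C, hb, he, hp⟩ := (besub e H).1 C₀ (hfill (.fm H)).symm
      refine ⟨C, hb, fun Y => Essence.ofEq ?_, fun Y => Essence.ofEq ?_⟩
      · rw [← hfill Y]; exact he Y
      · have h := hp Y; rw [hpc] at h; exact h
  | insert C' Γ' m h ih =>
      intro Γt H ha
      obtain ⟨C, h1, h2, h3⟩ := ih Γt H ha
      exact step Γt H C' Γ' m C h1 h2 h3
  | insertSemi C' Γ' Γ'' m h ih =>
      intro Γt H ha
      obtain ⟨C, h1, h2, h3⟩ := ih Γt H ha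
      have e : ∀ Z, (Ctx.comp C' (.semiL .hole Γ'')).fill Z = C'.fill (.semi Z Γ'') := by
        intro Z; rw [fill_comp]; rfl
      obtain ⟨Cn, g1, g2, g3⟩ :=
        step Γt H (Ctx.comp C' (.semiL .hole Γ'')) Γ' m C (by rw [e]; exact h1) h2 h3
      refine ⟨Cn, ?_, g2, g3⟩
      rw [← g1, e]
  | congr h e ih =>
      intro Γt H ha
      obtain ⟨C, h1, h2, h3⟩ := ih Γt H ha
      obtain ⟨C2, hb, he, hp⟩ := (besub e H).1 C h1
      exact ⟨C2, hb, fun Y => Essence.congr (h2 Y) (he Y),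
        fun Y => Essence.congr (h3 Y) (hp Y)⟩

/-- The generalized identity theorem, by induction on the formula. -/
lemma main : ∀ (F : BI) (Γt : Option Bunch) (Δ : Bunch),
    Essence (osemi Γt (.fm F)) Δ → ∃ n, LBIZc Δ F n := by
  intro F
  induction F with
  | var p =>
      intro Γt Δ h
      exact ⟨1, LBIZ.id Γt p h⟩
  | top =>
      intro Γt Δ h
      exact ⟨1, LBIZ.topR Δ⟩
  | bot =>
      intro Γt Δ h
      obtain ⟨C, h1, -, -⟩ := key h Γt .bot rfl
      exact ⟨1, h1 ▸ LBIZ.botL C .bot⟩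
  | mtop =>
      intro Γt Δ h
      exact ⟨1, LBIZ.mtopR Γt h⟩
  | conj F G ihF ihG =>
      intro Γt Δ h
      obtain ⟨C, h1, h2, -⟩ := key h Γt _ rfl
      subst h1
      have eF : Essence (osemi (some (osemi Γt (.fm G))) (.fm F))
          (C.fill (.semi (.fm F) (.fm G))) := by
        refine essEqLeft ?_ (h2 (.semi (.fm F) (.fm G)))
        cases Γt with
        | none => exact BunchEq.semiComm _ _
        | some Γ =>
            exact BunchEq.trans (BunchEq.semiAssoc _ _ _)
              (BunchEq.semiCongr (BunchEq.refl _) (BunchEq.semiComm _ _))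
      have eG : Essence (osemi (some (osemi Γt (.fm F))) (.fm G))
          (C.fill (.semi (.fm F) (.fm G))) := by
        refine essEqLeft ?_ (h2 (.semi (.fm F) (.fm G)))
        cases Γt with
        | none => exact BunchEq.refl _
        | some Γ => exact BunchEq.semiAssoc _ _ _
      obtain ⟨n, dF⟩ := ihF _ _ eF
      obtain ⟨m, dG⟩ := ihG _ _ eG
      exact ⟨_, LBIZ.conjL (LBIZ.conjR dF dG)⟩
  | disj F G ihF ihG =>
      intro Γt Δ h
      obtain ⟨C, h1, h2, -⟩ := key h Γt _ rfl
      subst h1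
      obtain ⟨n, dF⟩ := ihF Γt _ (h2 (.fm F))
      obtain ⟨m, dG⟩ := ihG Γt _ (h2 (.fm G))
      exact ⟨_, LBIZ.disjL (LBIZ.disjR₁ dF) (LBIZ.disjR₂ dG)⟩
  | imp F G ihF ihG =>
      intro Γt Δ h
      have hS : Essence (.semi (osemi Γt (.fm (.imp F G))) (.fm F)) (.semi Δ (.fm F)) :=
        essSemi _ h
      obtain ⟨n, dF⟩ := ihF (some (osemi Γt (.fm (.imp F G)))) (.semi Δ (.fm F)) hS
      have h1 : Essence (osemi (some (osemi Γt (.fm F))) (.fm (.imp F G)))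
          (.semi Δ (.fm F)) := by
        refine essEqLeft ?_ hS
        cases Γt with
        | none => exact BunchEq.semiComm _ _
        | some Γ =>
            refine BunchEq.trans (BunchEq.semiAssoc _ _ _) ?_
            refine BunchEq.trans (BunchEq.semiCongr (BunchEq.refl _) (BunchEq.semiComm _ _)) ?_
            exact BunchEq.symm (BunchEq.semiAssoc _ _ _)
      obtain ⟨m, dG⟩ := ihG (some (.semi Δ (.fm F))) (.semi (.fm G) (.semi Δ (.fm F)))
        (Essence.ofEq (BunchEq.semiComm _ _))
      have dImp := LBIZ.impL (C := Ctx.hole) (some (osemi Γt (.fm F))) h1 dF dG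
      exact ⟨_, LBIZ.impR dImp⟩
  | star F G ihF ihG =>
      intro Γt Δ h
      obtain ⟨C, h1, h2, h3⟩ := key h Γt _ rfl
      subst h1
      obtain ⟨n, dF⟩ := ihF none (.fm F) (Essence.ofEq (BunchEq.refl _))
      obtain ⟨m, dG⟩ := ihG none ((pc C).fill (.fm G)) (h3 (.fm G))
      have cand : Candidate (C.fill (.comma (.fm F) (.fm G))) (.fm F) ((pc C).fill (.fm G)) :=
        Or.inr (Wle.trans (Wle.ofEq (BunchEq.symm (pull C (.fm F) (.fm G)))) (pcWle C _))
      exact ⟨_, LBIZ.starL (LBIZ.starR (Or.inl cand) dF dG)⟩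
  | wand F G ihF ihG =>
      intro Γt Δ h
      obtain ⟨n, dF⟩ := ihF none (.fm F) (Essence.ofEq (BunchEq.refl _))
      have eG : Essence (osemi (some (.comma (.fm F) Δ)) (.fm G))
          (.semi (.comma (.fm .mtop) (.fm G)) (.comma (.fm F) Δ)) := by
        refine Essence.congr
          (Essence.insertSemi Ctx.hole (.fm G) (.comma (.fm F) Δ) none
            (Essence.ofEq (BunchEq.semiComm _ _))) ?_
        exact BunchEq.semiCongr (BunchEq.commaComm _ _) (BunchEq.refl _)
      obtain ⟨m, dG⟩ := ihG (some (.comma (.fm F) Δ)) _ eG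
      have candFF : Candidate (.fm F) (.fm F) (.fm .mtop) :=
        Or.inl ⟨rfl, Wle.ofEq (BunchEq.refl _)⟩
      have dL := LBIZ.wandL (Cand := Candidate) (cut := false) (C := Ctx.hole) (H := G)
        (some (.fm F)) (some (.fm .mtop)) (.fm F) Γt h
        (Or.inr ⟨.fm F, .fm .mtop, rfl, rfl, Or.inl candFF⟩) dF dG
      exact ⟨_, LBIZ.wandR (LBIZ.equiv (BunchEq.commaComm (.fm F) Δ) dL)⟩

end LBIZAux



/-- the id axiom of LBIZ generalises from propositional variables
to all formulas: E(Γ̃; F) ⊢ F is derivable in LBIZ. -/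
theorem lbiz_general_id (Γt : Option Bunch) (F : BI) (Δ : Bunch)
    (h : Essence (osemi Γt (.fm F)) Δ) :
    ∃ n, LBIZc Δ F n :=
  LBIZAux.main F Γt Δ h
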